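/- For every hypergraph H and all integers r ≥ 1 and λ ≥ 1, cms_r(λH) ≥ cms_r(H). -/

import Mathlib

/-- A hypergraph: a finite vertex type, a finite edge (label) type and an incidence
relation; distinct (parallel) edges may be incident with the same vertices. -/
structure CmsHypergraph where
  V : Type
  E : Type
  fintV : Fintype V
  fintE : Fintype E
  inc : E → V → Bool

namespace CmsHypergraph

/-- The number ε of edges of `H`. -/
def edgeCard (H : CmsHypergraph) : ℕ :=
  letI := H.fintE
  Fintype.card H.E

/-- The degree of a vertex: the number of edges incident with it. -/
def degree (H : CmsHypergraph) (v : H.V) : ℕ :=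
  letI := H.fintE
  (Finset.univ.filter (fun e => H.inc e v = true)).card

/-- The maximum degree Δ(H). -/
def maxDegree (H : CmsHypergraph) : ℕ :=
  letI := H.fintV
  Finset.univ.sup H.degree

/-- An ordering (labelling) of `H`, encoded by its ε-periodic enumeration:
`f i` is the edge whose label is `i % ε`; on `[ε]`, `f` is a bijection onto the
edge set. -/
structure IsOrdering (H : CmsHypergraph) (f : ℕ → H.E) : Prop where
  periodic : ∀ i, f (i + H.edgeCard) = f i
  inj : ∀ i j, i < H.edgeCard → j < H.edgeCard → f i = f j → i = j
  surj : ∀ e : H.E, ∃ i, i < H.edgeCard ∧ f i = e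

/-- The degree of `v` in the hypergraph `H(S)` formed (with multiplicity) by the
sequence `S` of `s` (cyclically) consecutive edges with labels `j, …, j+s-1`
taken modulo ε. -/
def windowDeg (H : CmsHypergraph) (f : ℕ → H.E) (j s : ℕ) (v : H.V) : ℕ :=
  ((Finset.range s).filter (fun i => H.inc (f (j + i)) v = true)).card

/-- Every sequence of `s` consecutive edges of the ordering `f` forms a hypergraph of
maximum degree at most `r`.  A window of `s` consecutive edges starts at a label `j`
with `j + s ≤ (a+1)·ε`, where `a·ε ≤ s < (a+1)·ε` (i.e. `a = s / ε`). -/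
def msOK (H : CmsHypergraph) (f : ℕ → H.E) (r s : ℕ) : Prop :=
  ∀ j v, j + s ≤ (s / H.edgeCard + 1) * H.edgeCard → H.windowDeg f j s v ≤ r

/-- Every sequence of `s` cyclically consecutive edges of the ordering `f` forms a
hypergraph of maximum degree at most `r`. -/
def cmsOK (H : CmsHypergraph) (f : ℕ → H.E) (r s : ℕ) : Prop :=
  ∀ j v, H.windowDeg f j s v ≤ r

/-- ms_r(ℓ): the largest `s` such that every `s` consecutive edges of `ℓ` form a
hypergraph of maximum degree at most `r`. -/
noncomputable def msrOf (H : CmsHypergraph) (f : ℕ → H.E) (r : ℕ) : ℕ :=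
  sSup {s | H.msOK f r s}

/-- cms_r(ℓ). -/
noncomputable def cmsrOf (H : CmsHypergraph) (f : ℕ → H.E) (r : ℕ) : ℕ :=
  sSup {s | H.cmsOK f r s}

/-- ms_r(H): the maximum of ms_r(ℓ) over all orderings ℓ of H. -/
noncomputable def msr (H : CmsHypergraph) (r : ℕ) : ℕ :=
  sSup {s | ∃ f, H.IsOrdering f ∧ H.msOK f r s}

/-- cms_r(H): the maximum of cms_r(ℓ) over all orderings ℓ of H. -/
noncomputable def cmsr (H : CmsHypergraph) (r : ℕ) : ℕ :=
  sSup {s | ∃ f, H.IsOrdering f ∧ H.cmsOK f r s}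

end CmsHypergraph

/-- λH: the hypergraph obtained from `H` by replacing each edge by `lam` parallel
copies. -/
def CmsHypergraph.scale (lam : ℕ) (H : CmsHypergraph) : CmsHypergraph where
  V := H.V
  E := Fin lam × H.E
  fintV := H.fintV
  fintE := letI := H.fintE; inferInstance
  inc := fun e v => H.inc e.2 v

namespace CmsHypergraph

variable {H : CmsHypergraph}

lemma periodic_iter {f : ℕ → H.E} (hp : ∀ i, f (i + H.edgeCard) = f i) :
    ∀ (k i : ℕ), f (i + k * H.edgeCard) = f i := by
  intro k
  induction k with
  | zero => simp
  | succ k ih =>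
    intro i
    have h : i + (k + 1) * H.edgeCard = (i + k * H.edgeCard) + H.edgeCard := by ring
    rw [h, hp, ih]

lemma windowDeg_eq_sum (f : ℕ → H.E) (j s : ℕ) (v : H.V) :
    H.windowDeg f j s v
      = ∑ i ∈ Finset.range s, (if H.inc (f (j + i)) v = true then 1 else 0) := by
  rw [windowDeg, Finset.card_filter]

lemma windowDeg_mono (f : ℕ → H.E) (j : ℕ) {s s' : ℕ} (h : s ≤ s') (v : H.V) :
    H.windowDeg f j s v ≤ H.windowDeg f j s' v :=
  Finset.card_le_card (Finset.filter_subset_filter _ (Finset.range_subset_range.2 h))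

lemma windowDeg_period_mul {f : ℕ → H.E} (hp : ∀ i, f (i + H.edgeCard) = f i)
    (k : ℕ) (v : H.V) :
    H.windowDeg f 0 (k * H.edgeCard) v = k * H.windowDeg f 0 H.edgeCard v := by
  induction k with
  | zero => simp [windowDeg]
  | succ k ih =>
    have hs : (k + 1) * H.edgeCard = k * H.edgeCard + H.edgeCard := by ring
    rw [windowDeg_eq_sum, hs, Finset.sum_range_add]
    have h2 : ∀ i, f (0 + (k * H.edgeCard + i)) = f (0 + i) := by
      intro i
      have : 0 + (k * H.edgeCard + i) = (0 + i) + k * H.edgeCard := by ring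
      rw [this, periodic_iter hp]
    rw [← windowDeg_eq_sum]
    simp only [h2]
    rw [← windowDeg_eq_sum, ih]
    ring

end CmsHypergraph

namespace CmsHypergraph

lemma scale_edgeCard (lam : ℕ) (H : CmsHypergraph) :
    (H.scale lam).edgeCard = lam * H.edgeCard := by
  letI := H.fintE
  simp [edgeCard, scale, Fintype.card_prod]
  exact (Fintype.card_prod (Fin lam) H.E).trans (by simp)

lemma scale_ordering (lam : ℕ) (H : CmsHypergraph) (hlam : 1 ≤ lam)
    {f : ℕ → H.E} (hf : H.IsOrdering f) :
    ∃ g : ℕ → (H.scale lam).E, (H.scale lam).IsOrdering g ∧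
      ∀ j s v, (H.scale lam).windowDeg g j s v = H.windowDeg f j s v := by
  have hε : 0 < H.edgeCard := by
    letI := H.fintE
    exact Fintype.card_pos_iff.2 ⟨f 0⟩
  set ε := H.edgeCard with hεdef
  refine ⟨fun i => (⟨(i / ε) % lam, Nat.mod_lt _ hlam⟩, f i), ?_, ?_⟩
  · constructor
    · intro i
      rw [scale_edgeCard]
      have h1 : (i + lam * ε) / ε = i / ε + lam := Nat.add_mul_div_right i lam hε
      have h2 : f (i + lam * ε) = f i := periodic_iter hf.periodic lam i
      show ((⟨((i + lam * ε) / ε) % lam, Nat.mod_lt _ hlam⟩, f (i + lam * ε)) : Fin lam × H.E) = (⟨(i / ε) % lam, Nat.mod_lt _ hlam⟩, f i)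
      simp [h1, h2, Nat.add_mod_right]
    · intro i j hi hj hij
      rw [scale_edgeCard] at hi hj
      have hdi : i / ε < lam := (Nat.div_lt_iff_lt_mul hε).2 hi
      have hdj : j / ε < lam := (Nat.div_lt_iff_lt_mul hε).2 hj
      have h1 : (i / ε) % lam = (j / ε) % lam := by
        have := congrArg Prod.fst hij
        simpa using congrArg Fin.val this
      rw [Nat.mod_eq_of_lt hdi, Nat.mod_eq_of_lt hdj] at h1
      have h2 : f i = f j := congrArg Prod.snd hij
      have hfi : f i = f (i % ε) := by
        conv_lhs => rw [← Nat.mod_add_div' i ε]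
        exact periodic_iter hf.periodic (i / ε) (i % ε)
      have hfj : f j = f (j % ε) := by
        conv_lhs => rw [← Nat.mod_add_div' j ε]
        exact periodic_iter hf.periodic (j / ε) (j % ε)
      have h3 : i % ε = j % ε :=
        hf.inj _ _ (Nat.mod_lt _ hε) (Nat.mod_lt _ hε) (by rw [← hfi, ← hfj, h2])
      calc i = i % ε + (i / ε) * ε := (Nat.mod_add_div' i ε).symm
        _ = j % ε + (j / ε) * ε := by rw [h1, h3]
        _ = j := Nat.mod_add_div' j ε
    · rintro ⟨c, e⟩
      obtain ⟨i, hi, hfi⟩ := hf.surj e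
      refine ⟨c.val * ε + i, ?_, ?_⟩
      · rw [scale_edgeCard]
        calc c.val * ε + i < c.val * ε + ε := by omega
          _ = (c.val + 1) * ε := by ring
          _ ≤ lam * ε := Nat.mul_le_mul_right ε c.isLt
      · have h1 : (c.val * ε + i) / ε = c.val := by
          rw [Nat.add_comm, Nat.add_mul_div_right _ _ hε, Nat.div_eq_of_lt hi]
          simp
        have h2 : f (c.val * ε + i) = f i := by
          rw [Nat.add_comm]
          exact periodic_iter hf.periodic c.val i
        refine Prod.ext ?_ (by simpa [h2])
        simp [h1, Nat.mod_eq_of_lt c.isLt]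
  · intro j s v
    rfl

end CmsHypergraph

theorem cmsr_scale_ge' (H : CmsHypergraph) (r lam : ℕ) (hr : 1 ≤ r) (hlam : 1 ≤ lam) :
    (H.scale lam).cmsr r ≥ H.cmsr r := by
  set S : Set ℕ := {s | ∃ f, H.IsOrdering f ∧ H.cmsOK f r s} with hSdef
  set S' : Set ℕ := {s | ∃ g, (H.scale lam).IsOrdering g ∧ (H.scale lam).cmsOK g r s}
    with hS'def
  have hsub : S ⊆ S' := by
    rintro s ⟨f, hford, hcms⟩
    obtain ⟨g, hgord, hw⟩ := H.scale_ordering lam hlam hford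
    refine ⟨g, hgord, fun j v => ?_⟩
    rw [hw]
    exact hcms j v
  show sSup S' ≥ sSup S
  rcases Set.eq_empty_or_nonempty S with hS | hS
  · rw [hS, csSup_empty]
    exact Nat.zero_le _
  by_cases hb : BddAbove S'
  · exact csSup_le_csSup hb hS hsub
  · have h1 : sSup S' = 0 := by rw [csSup_of_not_bddAbove hb, csSup_empty]; rfl
    obtain ⟨s₀, f, hford, _⟩ := hS
    -- find a huge element of S'
    set ε' := (H.scale lam).edgeCard with hε'def
    obtain ⟨s, hsS', hslt⟩ := not_bddAbove_iff.1 hb ((r + 1) * ε')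
    obtain ⟨g, hgord, hgcms⟩ := hsS'
    -- all incidences of the scaled hypergraph are false
    have hallfalse : ∀ (e : (H.scale lam).E) (v : (H.scale lam).V),
        (H.scale lam).inc e v = false := by
      intro e v
      by_contra hne
      have hinc : (H.scale lam).inc e v = true := by
        cases h : (H.scale lam).inc e v
        · exact absurd h hne
        · rfl
      obtain ⟨i, hi, hgi⟩ := hgord.surj e
      have hone : 1 ≤ (H.scale lam).windowDeg g 0 ε' v := by
        rw [CmsHypergraph.windowDeg]
        refine Finset.card_pos.2 ⟨i, Finset.mem_filter.2 ⟨Finset.mem_range.2 hi, ?_⟩⟩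
        simpa [hgi] using hinc
      have hmul : (H.scale lam).windowDeg g 0 ((r + 1) * ε') v
          = (r + 1) * (H.scale lam).windowDeg g 0 ε' v :=
        CmsHypergraph.windowDeg_period_mul hgord.periodic (r + 1) v
      have hge : r + 1 ≤ (H.scale lam).windowDeg g 0 ((r + 1) * ε') v := by
        rw [hmul]
        calc r + 1 = (r + 1) * 1 := by ring
          _ ≤ (r + 1) * (H.scale lam).windowDeg g 0 ε' v := Nat.mul_le_mul_left _ hone
      have hle : (H.scale lam).windowDeg g 0 ((r + 1) * ε') v ≤ r :=
        le_trans (CmsHypergraph.windowDeg_mono g 0 (le_of_lt hslt) v) (hgcms 0 v)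
      omega
    -- hence all incidences of H are false
    have hHfalse : ∀ (e : H.E) (v : H.V), H.inc e v = false := by
      intro e v
      exact hallfalse (⟨0, hlam⟩, e) v
    -- hence S is unbounded
    have hSunb : ¬ BddAbove S := by
      rw [not_bddAbove_iff]
      intro x
      refine ⟨x + 1, ⟨f, hford, fun j v => ?_⟩, by omega⟩
      have : H.windowDeg f j (x + 1) v = 0 := by
        rw [CmsHypergraph.windowDeg]
        simp [hHfalse]
      omega
    rw [h1, csSup_of_not_bddAbove hSunb, csSup_empty]
    exact bot_le


/-- Lemma: `cms_r(λH) ≥ cms_r(H)`. -/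
theorem cmsr_scale_ge (H : CmsHypergraph) (r lam : ℕ) (hr : 1 ≤ r) (hlam : 1 ≤ lam) :
    (H.scale lam).cmsr r ≥ H.cmsr r := by
  exact cmsr_scale_ge' H r lam hr hlam
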